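/- arXiv:2006.08316 — 3 statements merged into one kernel-verified Lean document; each statement's English description precedes it below -/
import Mathlib

section
/- Let A be an M-algebra and ⊑ a preorder on A containing the order of A. Then the following are equivalent: (1) ⊑ is a congruence ordering on A; (2) ⊑ equals the kernel of some M-algebra morphism φ : A → B; (3) for every u ∈ M(⊑) (the lift of the relation ⊑), π(M p₀(u)) ⊑ π(M p₁(u)), where p₀, p₁ are the two projections; (4) ⊑, viewed as a subset of A × A, induces a subalgebra of the product algebra A × A. -/
/-- An object of `Pos`: a type equipped with a partial order. -/
structure Pos : Type 1 where
  car : Type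
  po : PartialOrder car

attribute [instance] Pos.po

/-- Monotone maps between objects of `Pos`. -/
structure PHom (A B : Pos) where
  f : A.car → B.car
  mono : Monotone f

def PHom.id (A : Pos) : PHom A A := ⟨fun a => a, fun _ _ h => h⟩

def PHom.comp {A B C : Pos} (g : PHom B C) (f : PHom A B) : PHom A C :=
  ⟨fun a => g.f (f.f a), fun _ _ h => g.mono (f.mono h)⟩

/-- A monad on the category `Pos` of partially ordered sets and monotone maps. -/
structure OMonad : Type 1 where
  obj : Pos → Pos
  map : {A B : Pos} → PHom A B → PHom (obj A) (obj B)
  map_id : ∀ A : Pos, map (PHom.id A) = PHom.id (obj A)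
  map_comp : ∀ {A B C : Pos} (f : PHom A B) (g : PHom B C),
      map (g.comp f) = (map g).comp (map f)
  sing : ∀ A : Pos, PHom A (obj A)
  flat : ∀ A : Pos, PHom (obj (obj A)) (obj A)
  sing_nat : ∀ {A B : Pos} (f : PHom A B), (map f).comp (sing A) = (sing B).comp f
  flat_nat : ∀ {A B : Pos} (f : PHom A B),
      (map f).comp (flat A) = (flat B).comp (map (map f))
  flat_sing : ∀ A, (flat A).comp (sing (obj A)) = PHom.id (obj A)
  flat_map_sing : ∀ A, (flat A).comp (map (sing A)) = PHom.id (obj A)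
  flat_assoc : ∀ A, (flat A).comp (flat (obj A)) = (flat A).comp (map (flat A))

/-- An Eilenberg–Moore algebra for the monad `M`. -/
structure OAlg (M : OMonad) where
  A : Pos
  pi : PHom (M.obj A) A
  unit_law : pi.comp (M.sing A) = PHom.id A
  assoc_law : pi.comp (M.map pi) = pi.comp (M.flat A)

/-- A morphism of Eilenberg–Moore algebras. -/
structure OAlgHom {M : OMonad} (X Y : OAlg M) where
  h : PHom X.A Y.A
  comm : h.comp X.pi = Y.pi.comp (M.map h)

def OAlgHom.comp {M : OMonad} {X Y Z : OAlg M} (g : OAlgHom Y Z) (f : OAlgHom X Y) :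
    OAlgHom X Z :=
  ⟨g.h.comp f.h, by
    calc (g.h.comp f.h).comp X.pi = g.h.comp (f.h.comp X.pi) := rfl
      _ = g.h.comp (Y.pi.comp (M.map f.h)) := by rw [f.comm]
      _ = (g.h.comp Y.pi).comp (M.map f.h) := rfl
      _ = (Z.pi.comp (M.map g.h)).comp (M.map f.h) := by rw [g.comm]
      _ = Z.pi.comp ((M.map g.h).comp (M.map f.h)) := rfl
      _ = Z.pi.comp (M.map (g.h.comp f.h)) := by rw [← M.map_comp]⟩

/-- The free `M`-algebra over `A`, carried by `M A` with product `flat`. -/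
def OMonad.free (M : OMonad) (A : Pos) : OAlg M :=
  ⟨M.obj A, M.flat A, M.flat_sing A, (M.flat_assoc A).symm⟩

/- Sub-posets, products, relations as sub-posets of products. -/

def Pos.sub (A : Pos) (S : Set A.car) : Pos := ⟨{a : A.car // a ∈ S}, inferInstance⟩

def subIncl (A : Pos) (S : Set A.car) : PHom (A.sub S) A := ⟨fun a => a.val, fun _ _ h => h⟩

def Pos.prod (A B : Pos) : Pos := ⟨A.car × B.car, inferInstance⟩

def prodFst (A B : Pos) : PHom (A.prod B) A := ⟨Prod.fst, fun _ _ h => h.1⟩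
def prodSnd (A B : Pos) : PHom (A.prod B) B := ⟨Prod.snd, fun _ _ h => h.2⟩

/-- A relation `r` on `A`, as a sub-poset of `A × A`. -/
def relPos (A : Pos) (r : A.car → A.car → Prop) : Pos :=
  ⟨{p : A.car × A.car // r p.1 p.2}, inferInstance⟩

def relFst (A : Pos) (r : A.car → A.car → Prop) : PHom (relPos A r) A :=
  ⟨fun p => p.val.1, fun _ _ h => h.1⟩
def relSnd (A : Pos) (r : A.car → A.car → Prop) : PHom (relPos A r) A :=
  ⟨fun p => p.val.2, fun _ _ h => h.2⟩

/- The standing convention on the monad `M`. -/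

def PreservesInj (M : OMonad) : Prop :=
  ∀ {A B : Pos} (f : PHom A B), Function.Injective f.f → Function.Injective (M.map f).f
def PreservesSurj (M : OMonad) : Prop :=
  ∀ {A B : Pos} (f : PHom A B), Function.Surjective f.f → Function.Surjective (M.map f).f
def PreservesBij (M : OMonad) : Prop :=
  ∀ {A B : Pos} (f : PHom A B), Function.Bijective f.f → Function.Bijective (M.map f).f
def PreservesPre (M : OMonad) : Prop :=
  ∀ {A B : Pos} (f : PHom A B) (S : Set B.car),
    Set.range (M.map (subIncl A (f.f ⁻¹' S))).f
      = (M.map f).f ⁻¹' Set.range (M.map (subIncl B S)).f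

/-- `M` uses the standard ordering: the order on `M A` is the lift of the order on `A`. -/
def UsesStdOrder (M : OMonad) : Prop :=
  ∀ (A : Pos) (s t : (M.obj A).car),
    s ≤ t ↔ ∃ u : (M.obj (relPos A (fun a b => a ≤ b))).car,
      (M.map (relFst A (fun a b => a ≤ b))).f u = s ∧
      (M.map (relSnd A (fun a b => a ≤ b))).f u = t

/-- The standing convention of the paper. -/
def Convention (M : OMonad) : Prop :=
  PreservesInj M ∧ PreservesSurj M ∧ PreservesBij M ∧ PreservesPre M ∧ UsesStdOrder M

/- Quotients by preorders containing the order. -/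

/-- A preorder on (the carrier of) `A` containing the partial order of `A`. -/
structure PreCong (A : Pos) where
  r : A.car → A.car → Prop
  refl : ∀ a, r a a
  trans : ∀ a b c, r a b → r b c → r a c
  le_sub : ∀ a b : A.car, a ≤ b → r a b

def PreCong.setoid {A : Pos} (co : PreCong A) : Setoid A.car where
  r a b := co.r a b ∧ co.r b a
  iseqv := ⟨fun a => ⟨co.refl a, co.refl a⟩, fun h => ⟨h.2, h.1⟩,
    fun h1 h2 => ⟨co.trans _ _ _ h1.1 h2.1, co.trans _ _ _ h2.2 h1.2⟩⟩

/-- The quotient poset `A/⊑`. -/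
def quotPos {A : Pos} (co : PreCong A) : Pos where
  car := Quotient co.setoid
  po :=
    { le := Quotient.lift₂ co.r (fun a b a' b' ha hb => propext
        ⟨fun h => co.trans _ _ _ ha.2 (co.trans _ _ _ h hb.1),
         fun h => co.trans _ _ _ ha.1 (co.trans _ _ _ h hb.2)⟩)
      le_refl := fun q => Quotient.inductionOn q co.refl
      le_trans := by
        intro q1 q2 q3
        refine Quotient.inductionOn₃ q1 q2 q3 ?_
        intro a b d h1 h2
        exact co.trans a b d h1 h2
      lt := fun (x y : Quotient co.setoid) => Quotient.lift₂ (s₁ := co.setoid) (s₂ := co.setoid) co.r (fun a b a' b' ha hb => propext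
          ⟨fun h => co.trans _ _ _ ha.2 (co.trans _ _ _ h hb.1),
           fun h => co.trans _ _ _ ha.1 (co.trans _ _ _ h hb.2)⟩) x y ∧
        ¬ Quotient.lift₂ (s₁ := co.setoid) (s₂ := co.setoid) co.r (fun a b a' b' ha hb => propext
          ⟨fun h => co.trans _ _ _ ha.2 (co.trans _ _ _ h hb.1),
           fun h => co.trans _ _ _ ha.1 (co.trans _ _ _ h hb.2)⟩) y x
      lt_iff_le_not_ge := fun _ _ => Iff.rfl
      le_antisymm := by
        intro q1 q2
        refine Quotient.inductionOn₂ q1 q2 ?_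
        intro a b h1 h2
        exact Quotient.sound ⟨h1, h2⟩ }

/-- The quotient map `A → A/⊑`. -/
def quotHom {A : Pos} (co : PreCong A) : PHom A (quotPos co) :=
  ⟨fun a => Quotient.mk co.setoid a, fun a b h => co.le_sub a b h⟩

/-- `⊑` is a congruence ordering on the algebra `X`:
`s ⊑_M t` (i.e. `M q (s) ≤ M q (t)`) implies `π(s) ⊑ π(t)`. -/
def IsCongOrdP (M : OMonad) (X : OAlg M) (co : PreCong X.A) : Prop :=
  ∀ s t : (M.obj X.A).car,
    (M.map (quotHom co)).f s ≤ (M.map (quotHom co)).f t → co.r (X.pi.f s) (X.pi.f t)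

/-- The relation `r` is a congruence ordering on the algebra `X`. -/
def IsCongruenceOrdering (M : OMonad) (X : OAlg M) (r : X.A.car → X.A.car → Prop) : Prop :=
  ∃ (h1 : ∀ a, r a a) (h2 : ∀ a b c, r a b → r b c → r a c)
    (h3 : ∀ a b : X.A.car, a ≤ b → r a b),
    IsCongOrdP M X ⟨r, h1, h2, h3⟩

/- Contexts and syntactic congruences. -/

/-- `A + □`: the poset `A` extended by a single extra point `□`. -/
def Pos.addBox (A : Pos) : Pos := ⟨A.car ⊕ PUnit, inferInstance⟩

/-- The map `A + □ → A` substituting `a` for `□`. -/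
def substHom (M : OMonad) (X : OAlg M) (a : X.A.car) : PHom X.A.addBox X.A :=
  ⟨fun z => Sum.elim (fun x => x) (fun _ => a) z, by
    intro x y h
    cases h with
    | inl h => exact h
    | inr h => exact le_refl a⟩

/-- Evaluation `p[a]` of a context `p ∈ M(A + □)` at `a ∈ A`. -/
def ctxEval (M : OMonad) (X : OAlg M) (p : (M.obj X.A.addBox).car) (a : X.A.car) : X.A.car :=
  X.pi.f ((M.map (substHom M X a)).f p)

/-- The syntactic congruence `a ≼_K b` of a set `K`. -/
def synLe (M : OMonad) (X : OAlg M) (K : Set X.A.car) (a b : X.A.car) : Prop :=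
  ∀ p : (M.obj X.A.addBox).car, ctxEval M X p a ∈ K → ctxEval M X p b ∈ K

def UpClosed (A : Pos) (K : Set A.car) : Prop :=
  ∀ a b : A.car, a ∈ K → a ≤ b → b ∈ K

/-- The derivative `p⁻¹[K]` of `K` by the context `p`. -/
def ctxDeriv (M : OMonad) (X : OAlg M) (p : (M.obj X.A.addBox).car) (K : Set X.A.car) :
    Set X.A.car :=
  {a | ctxEval M X p a ∈ K}

/-- `A` carries the trivial (discrete) order. -/
def TrivOrder (A : Pos) : Prop := ∀ a b : A.car, a ≤ b → a = b

/-- A morphism from a free algebra recognises a language `K` if `K` is the preimage of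
an upwards closed set. -/
def Recognises {M : OMonad} {Sg : Pos} {X : OAlg M} (φ : OAlgHom (M.free Sg) X)
    (K : Set ((M.obj Sg).car)) : Prop :=
  ∃ P : Set X.A.car, UpClosed X.A P ∧ K = φ.h.f ⁻¹' P

/-- Embedding of `Σ + □` into `(M Σ) + □` via `sing`, used to view contexts over the
alphabet as contexts over the free algebra. -/
def singBox (M : OMonad) (Sg : Pos) : PHom Sg.addBox (M.obj Sg).addBox :=
  ⟨Sum.map (M.sing Sg).f (fun x => x), by
    intro x y h
    cases h with
    | inl h => exact Sum.LiftRel.inl ((M.sing Sg).mono h)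
    | inr h => exact Sum.LiftRel.inr h⟩

/-- Evaluation of a context `p ∈ M(Σ + □)` at an element `s ∈ M Σ` of the free algebra. -/
def freeCtxEval (M : OMonad) (Sg : Pos) (p : (M.obj Sg.addBox).car) (s : (M.obj Sg).car) :
    (M.obj Sg).car :=
  ctxEval M (M.free Sg) ((M.map (singBox M Sg)).f p) s

/- Finitary monads and algebras. -/

/-- `M` is finitary: it preserves directed unions. -/
def FinitaryM (M : OMonad) : Prop :=
  ∀ (A : Pos) (ι : Type) (D : ι → Set A.car), Directed (· ⊆ ·) D → (⋃ i, D i) = Set.univ →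
    ∀ s : (M.obj A).car, ∃ i, ∃ s₀ : (M.obj (A.sub (D i))).car,
      (M.map (subIncl A (D i))).f s₀ = s

/-- A finitary algebra: (sort-wise) finite universe and finitely generated. -/
def FinitaryAlg (M : OMonad) (X : OAlg M) : Prop :=
  Finite X.A.car ∧ ∃ C : Set X.A.car, C.Finite ∧
    ∀ a : X.A.car, ∃ s : (M.obj (X.A.sub C)).car, a = X.pi.f ((M.map (subIncl X.A C)).f s)
/-- A morphism of monads `M₀ ⇒ M₁`. -/
structure OMonadHom (M₀ M₁ : OMonad) where
  app : ∀ A : Pos, PHom (M₀.obj A) (M₁.obj A)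
  naturality : ∀ {A B : Pos} (f : PHom A B),
      (app B).comp (M₀.map f) = (M₁.map f).comp (app A)
  sing_comm : ∀ A : Pos, (app A).comp (M₀.sing A) = M₁.sing A
  flat_comm : ∀ A : Pos,
      (app A).comp (M₀.flat A)
        = (M₁.flat A).comp ((app (M₁.obj A)).comp (M₀.map (app A)))

/-- The `ρ`-reduct of an `M₁`-algebra: the `M₀`-algebra with product `π ∘ ρ`. -/
def OMonadHom.reduct {M₀ M₁ : OMonad} (ρ : OMonadHom M₀ M₁) (X : OAlg M₁) : OAlg M₀ where
  A := X.A
  pi := X.pi.comp (ρ.app X.A)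
  unit_law := by
    calc (X.pi.comp (ρ.app X.A)).comp (M₀.sing X.A)
        = X.pi.comp ((ρ.app X.A).comp (M₀.sing X.A)) := rfl
      _ = X.pi.comp (M₁.sing X.A) := by rw [ρ.sing_comm]
      _ = PHom.id X.A := X.unit_law
  assoc_law := by
    have hnat := ρ.naturality (X.pi.comp (ρ.app X.A))
    have hint := ρ.naturality (ρ.app X.A)
    calc (X.pi.comp (ρ.app X.A)).comp (M₀.map (X.pi.comp (ρ.app X.A)))
        = X.pi.comp ((ρ.app X.A).comp (M₀.map (X.pi.comp (ρ.app X.A)))) := rfl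
      _ = X.pi.comp ((M₁.map (X.pi.comp (ρ.app X.A))).comp (ρ.app (M₀.obj X.A))) := by
            rw [hnat]
      _ = (X.pi.comp (M₁.map (X.pi.comp (ρ.app X.A)))).comp (ρ.app (M₀.obj X.A)) := rfl
      _ = (X.pi.comp ((M₁.map X.pi).comp (M₁.map (ρ.app X.A)))).comp (ρ.app (M₀.obj X.A)) := by
            rw [M₁.map_comp]
      _ = ((X.pi.comp (M₁.map X.pi)).comp (M₁.map (ρ.app X.A))).comp (ρ.app (M₀.obj X.A)) := rfl
      _ = ((X.pi.comp (M₁.flat X.A)).comp (M₁.map (ρ.app X.A))).comp (ρ.app (M₀.obj X.A)) := by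
            rw [X.assoc_law]
      _ = X.pi.comp ((M₁.flat X.A).comp ((M₁.map (ρ.app X.A)).comp (ρ.app (M₀.obj X.A)))) := rfl
      _ = X.pi.comp ((M₁.flat X.A).comp ((ρ.app (M₁.obj X.A)).comp (M₀.map (ρ.app X.A)))) := by
            rw [hint]
      _ = X.pi.comp ((ρ.app X.A).comp (M₀.flat X.A)) := by rw [← ρ.flat_comm]
      _ = (X.pi.comp (ρ.app X.A)).comp (M₀.flat X.A) := rfl

/-- `ρ : M₀ ⇒ M₁` is dense over the class `C`. -/
def DenseOver {M₀ M₁ : OMonad} (ρ : OMonadHom M₀ M₁) (C : Set (OAlg M₁)) : Prop :=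
  ∀ X ∈ C, ∀ (S : Set X.A.car) (s : (M₁.obj (X.A.sub S)).car),
    ∃ s₀ : (M₀.obj (X.A.sub S)).car,
      X.pi.f ((ρ.app X.A).f ((M₀.map (subIncl X.A S)).f s₀))
        = X.pi.f ((M₁.map (subIncl X.A S)).f s)

/-- `P` is a binary product of `A` and `B` in the category of `M`-algebras
(concretely: the projections induce an order isomorphism with the product poset). -/
def IsBinProd (M : OMonad) (P A B : OAlg M) : Prop :=
  ∃ (pa : OAlgHom P A) (pb : OAlgHom P B),
    Function.Bijective (fun x => (pa.h.f x, pb.h.f x)) ∧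
    ∀ x y : P.A.car, x ≤ y ↔ (pa.h.f x ≤ pa.h.f y ∧ pb.h.f x ≤ pb.h.f y)

/-- Closure of a class of algebras under binary products. -/
inductive InProdClosure (M : OMonad) (C : Set (OAlg M)) : OAlg M → Prop
  | base : ∀ A ∈ C, InProdClosure M C A
  | prod : ∀ A B P, InProdClosure M C A → InProdClosure M C B →
      IsBinProd M P A B → InProdClosure M C P

/-- `P` is a product of the family `A` of `M`-algebras. -/
def IsProdOf (M : OMonad) (P : OAlg M) {I : Type} (A : I → OAlg M) : Prop :=
  ∃ p : ∀ i, OAlgHom P (A i),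
    Function.Bijective (fun (x : P.A.car) (i : I) => (p i).h.f x) ∧
    ∀ x y : P.A.car, x ≤ y ↔ ∀ i, (p i).h.f x ≤ (p i).h.f y

/-- `B` is a quotient of `A`. -/
def IsQuotientOf (M : OMonad) (B A : OAlg M) : Prop :=
  ∃ φ : OAlgHom A B, Function.Surjective φ.h.f

/-- `B` is a subalgebra of `A` (an order embedding which is a morphism). -/
def IsSubalgebraOf (M : OMonad) (B A : OAlg M) : Prop :=
  ∃ φ : OAlgHom B A, ∀ x y : B.A.car, φ.h.f x ≤ φ.h.f y ↔ x ≤ y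

/-- A pseudo-variety (here with a single sort): a class of finitary algebras closed
under quotients, finitary subalgebras of finite products, and (the single-sorted
instance of) sort-accumulation points. -/
def PseudoVariety (M : OMonad) (V : Set (OAlg M)) : Prop :=
  (∀ X ∈ V, FinitaryAlg M X) ∧
  (∀ A ∈ V, ∀ B, IsQuotientOf M B A → B ∈ V) ∧
  (∀ (n : ℕ) (A : Fin n → OAlg M), (∀ i, A i ∈ V) →
    ∀ P, IsProdOf M P A → ∀ B, FinitaryAlg M B → IsSubalgebraOf M B P → B ∈ V) ∧
  (∀ B, FinitaryAlg M B → (∃ A ∈ V, IsQuotientOf M A B) → B ∈ V)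

/-- The inclusion of a relation, as a sub-poset, into the product poset. -/
def relIncl (A : Pos) (r : A.car → A.car → Prop) : PHom (relPos A r) (A.prod A) :=
  ⟨fun p => p.val, fun _ _ h => h⟩

/-! ### Auxiliary material for the congruence characterisation theorem -/

theorem phomExt {A B : Pos} {f g : PHom A B} (h : f.f = g.f) : f = g := by
  cases f; cases g; cases h; rfl

theorem mapApply (M : OMonad) {A B C : Pos} (f : PHom A B) (g : PHom B C)
    (x : (M.obj A).car) :
    (M.map (g.comp f)).f x = (M.map g).f ((M.map f).f x) := by
  rw [M.map_comp]; rfl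

/-- The discrete poset on the carrier of `A`. -/
@[reducible] def discPos (A : Pos) : Pos :=
  ⟨A.car,
    { le := fun a b => a = b
      lt := fun _ _ => False
      le_refl := fun _ => rfl
      le_trans := fun a b c h1 h2 =>
        Eq.trans (show a = b from h1) (show b = c from h2)
      lt_iff_le_not_ge := fun a b =>
        ⟨False.elim, fun h => absurd h.1.symm h.2⟩
      le_antisymm := fun _ _ h1 _ => h1 }⟩

/-- Any function out of a discrete poset is monotone. -/
def discMap {A : Pos} {B : Pos} (f : (discPos A).car → B.car) : PHom (discPos A) B :=
  ⟨f, fun a b h => by cases (show a = b from h); exact le_refl _⟩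

def discHom (A : Pos) : PHom (discPos A) A := discMap (fun a => a)

theorem discBij (A : Pos) : Function.Bijective (discHom A).f :=
  ⟨fun _ _ h => h, fun a => ⟨a, rfl⟩⟩

/-- (2) implies (1): a relation that is the kernel of a morphism is a congruence
ordering. -/
theorem kerToCong (M : OMonad) (X : OAlg M) (co : PreCong X.A)
    (Y : OAlg M) (φ : OAlgHom X Y)
    (hker : ∀ a b, co.r a b ↔ φ.h.f a ≤ φ.h.f b) :
    IsCongOrdP M X co := by
  intro s t hst
  let ψ : PHom (quotPos co) Y.A :=
    ⟨Quotient.lift φ.h.f (fun a b hab =>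
        le_antisymm ((hker a b).mp hab.1) ((hker b a).mp hab.2)),
     fun x y => Quotient.inductionOn₂ x y (fun a b h => (hker a b).mp h)⟩
  have hfact : ψ.comp (quotHom co) = φ.h := phomExt rfl
  have h1 : ∀ z, (M.map φ.h).f z = (M.map ψ).f ((M.map (quotHom co)).f z) := by
    intro z
    rw [← mapApply M (quotHom co) ψ z, hfact]
  have hmono : (M.map φ.h).f s ≤ (M.map φ.h).f t := by
    rw [h1 s, h1 t]; exact (M.map ψ).mono hst
  have hcomm : ∀ z, φ.h.f (X.pi.f z) = Y.pi.f ((M.map φ.h).f z) :=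
    fun z => congrFun (congrArg PHom.f φ.comm) z
  exact (hker _ _).mpr (by rw [hcomm, hcomm]; exact Y.pi.mono hmono)

/-- (1) implies (3): a congruence ordering is closed under the lifted relation. -/
theorem congToLift (M : OMonad) (hM : Convention M) (X : OAlg M) (co : PreCong X.A)
    (H : IsCongOrdP M X co) (u : (M.obj (relPos X.A co.r)).car) :
    co.r (X.pi.f ((M.map (relFst X.A co.r)).f u))
      (X.pi.f ((M.map (relSnd X.A co.r)).f u)) := by
  obtain ⟨-, -, -, -, hstd⟩ := hM
  let g : PHom (relPos X.A co.r) (relPos (quotPos co) (fun a b => a ≤ b)) :=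
    ⟨fun p => ⟨((quotHom co).f p.val.1, (quotHom co).f p.val.2), p.property⟩,
     fun p p' h => ⟨(quotHom co).mono h.1, (quotHom co).mono h.2⟩⟩
  apply H
  refine (hstd (quotPos co) _ _).mpr ⟨(M.map g).f u, ?_, ?_⟩
  · rw [← mapApply M g (relFst (quotPos co) (fun a b => a ≤ b)) u]
    have h : (relFst (quotPos co) (fun a b => a ≤ b)).comp g
        = (quotHom co).comp (relFst X.A co.r) := rfl
    rw [h, mapApply]
  · rw [← mapApply M g (relSnd (quotPos co) (fun a b => a ≤ b)) u]
    have h : (relSnd (quotPos co) (fun a b => a ≤ b)).comp g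
        = (quotHom co).comp (relSnd X.A co.r) := rfl
    rw [h, mapApply]

/-- (1) implies (2): a congruence ordering is the kernel of the quotient morphism. -/
theorem congToKer (M : OMonad) (hM : Convention M) (X : OAlg M) (co : PreCong X.A)
    (H : IsCongOrdP M X co) :
    ∃ (Y : OAlg M) (φ : OAlgHom X Y), ∀ a b, co.r a b ↔ φ.h.f a ≤ φ.h.f b := by
  obtain ⟨-, hsurj, -, -, -⟩ := hM
  have hq : Function.Surjective (quotHom co).f := fun x => Quotient.exists_rep x
  have hMq : Function.Surjective (M.map (quotHom co)).f := hsurj _ hq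
  let sec := Function.surjInv hMq
  have hsec : ∀ x, (M.map (quotHom co)).f (sec x) = x := fun x => Function.surjInv_eq hMq x
  have key : ∀ z, (quotHom co).f (X.pi.f (sec ((M.map (quotHom co)).f z)))
      = (quotHom co).f (X.pi.f z) := by
    intro z
    exact Quotient.sound ⟨H _ _ (le_of_eq (hsec _)), H _ _ (le_of_eq (hsec _).symm)⟩
  let pQ : PHom (M.obj (quotPos co)) (quotPos co) :=
    ⟨fun x => (quotHom co).f (X.pi.f (sec x)),
     fun x y hxy => H _ _ (by rw [hsec, hsec]; exact hxy)⟩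
  have keyHom : pQ.comp (M.map (quotHom co)) = (quotHom co).comp X.pi :=
    phomExt (funext key)
  have unit : pQ.comp (M.sing (quotPos co)) = PHom.id (quotPos co) := by
    apply phomExt; funext x
    obtain ⟨a, rfl⟩ := hq x
    have h1 : (M.map (quotHom co)).f ((M.sing X.A).f a)
        = (M.sing (quotPos co)).f ((quotHom co).f a) :=
      congrFun (congrArg PHom.f (M.sing_nat (quotHom co))) a
    have h2 : X.pi.f ((M.sing X.A).f a) = a :=
      congrFun (congrArg PHom.f X.unit_law) a
    show (quotHom co).f (X.pi.f (sec ((M.sing (quotPos co)).f ((quotHom co).f a))))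
        = (quotHom co).f a
    rw [← h1, key, h2]
  have hMMq : Function.Surjective (M.map (M.map (quotHom co))).f := hsurj _ hMq
  have assoc : pQ.comp (M.map pQ) = pQ.comp (M.flat (quotPos co)) := by
    apply phomExt; funext W
    obtain ⟨V, rfl⟩ := hMMq W
    have e1 : (M.map pQ).f ((M.map (M.map (quotHom co))).f V)
        = (M.map (quotHom co)).f ((M.map X.pi).f V) := by
      calc (M.map pQ).f ((M.map (M.map (quotHom co))).f V)
          = (M.map (pQ.comp (M.map (quotHom co)))).f V :=
            (mapApply M _ _ V).symm
        _ = (M.map ((quotHom co).comp X.pi)).f V := by rw [keyHom]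
        _ = (M.map (quotHom co)).f ((M.map X.pi).f V) := mapApply M _ _ V
    have e2 : (M.flat (quotPos co)).f ((M.map (M.map (quotHom co))).f V)
        = (M.map (quotHom co)).f ((M.flat X.A).f V) :=
      (congrFun (congrArg PHom.f (M.flat_nat (quotHom co))) V).symm
    show pQ.f ((M.map pQ).f ((M.map (M.map (quotHom co))).f V))
        = pQ.f ((M.flat (quotPos co)).f ((M.map (M.map (quotHom co))).f V))
    rw [e1, e2]
    show (quotHom co).f (X.pi.f (sec ((M.map (quotHom co)).f ((M.map X.pi).f V))))
        = (quotHom co).f (X.pi.f (sec ((M.map (quotHom co)).f ((M.flat X.A).f V))))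
    rw [key, key]
    have h3 : X.pi.f ((M.map X.pi).f V) = X.pi.f ((M.flat X.A).f V) :=
      congrFun (congrArg PHom.f X.assoc_law) V
    rw [h3]
  exact ⟨⟨quotPos co, pQ, unit, assoc⟩, ⟨quotHom co, keyHom.symm⟩,
    fun a b => Iff.rfl⟩

/-- (3) implies (1): closure under the lifted relation implies being a congruence
ordering. -/
theorem liftToCong (M : OMonad) (hM : Convention M) (X : OAlg M) (co : PreCong X.A)
    (H : ∀ u : (M.obj (relPos X.A co.r)).car,
        co.r (X.pi.f ((M.map (relFst X.A co.r)).f u))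
          (X.pi.f ((M.map (relSnd X.A co.r)).f u))) :
    IsCongOrdP M X co := by
  obtain ⟨-, -, hbij, -, hstd⟩ := hM
  intro s t hst
  obtain ⟨w, hw1, hw2⟩ := (hstd (quotPos co) _ _).mp hst
  obtain ⟨sh, rfl⟩ := (hbij (discHom X.A) (discBij X.A)).2 s
  obtain ⟨th, rfl⟩ := (hbij (discHom X.A) (discBij X.A)).2 t
  obtain ⟨wh, rfl⟩ := (hbij (discHom (relPos (quotPos co) (fun a b => a ≤ b)))
      (discBij _)).2 w
  have hq : Function.Surjective (quotHom co).f := fun x => Quotient.exists_rep x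
  let σ := Function.surjInv hq
  have hσ : ∀ y, (quotHom co).f (σ y) = y := fun y => Function.surjInv_eq hq y
  let SQ := relPos (quotPos co) (fun a b => a ≤ b)
  let κ : PHom (discPos X.A) (relPos X.A co.r) := discMap (fun a =>
    ⟨(a, σ ((quotHom co).f a)),
      show (quotHom co).f a ≤ (quotHom co).f (σ ((quotHom co).f a)) from
        le_of_eq (hσ _).symm⟩)
  let κ' : PHom (discPos X.A) (relPos X.A co.r) := discMap (fun a =>
    ⟨(σ ((quotHom co).f a), a),
      show (quotHom co).f (σ ((quotHom co).f a)) ≤ (quotHom co).f a from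
        le_of_eq (hσ _)⟩)
  let k : PHom (discPos SQ) (relPos X.A co.r) := discMap (fun β =>
    ⟨(σ β.val.1, σ β.val.2),
      show (quotHom co).f (σ β.val.1) ≤ (quotHom co).f (σ β.val.2) by
        rw [hσ, hσ]; exact β.property⟩)
  let σh : PHom (discPos (quotPos co)) X.A := discMap (fun y => σ y)
  let qhd : PHom (discPos X.A) (discPos (quotPos co)) :=
    discMap (fun a => (quotHom co).f a)
  let p1 : PHom (discPos SQ) (discPos (quotPos co)) := discMap (fun β => β.val.1)
  let p2 : PHom (discPos SQ) (discPos (quotPos co)) := discMap (fun β => β.val.2)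
  -- the two middle elements
  have c2 := H ((M.map κ).f sh)
  have e21 : (M.map (relFst X.A co.r)).f ((M.map κ).f sh)
      = (M.map (discHom X.A)).f sh := by
    rw [← mapApply M κ (relFst X.A co.r) sh]
    have h : (relFst X.A co.r).comp κ = discHom X.A := rfl
    rw [h]
  have e22 : (M.map (relSnd X.A co.r)).f ((M.map κ).f sh)
      = (M.map σh).f ((M.map qhd).f sh) := by
    rw [← mapApply M κ (relSnd X.A co.r) sh, ← mapApply M qhd σh sh]
    have h : (relSnd X.A co.r).comp κ = σh.comp qhd := rfl
    rw [h]
  rw [e21, e22] at c2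
  have c3 := H ((M.map κ').f th)
  have e31 : (M.map (relFst X.A co.r)).f ((M.map κ').f th)
      = (M.map σh).f ((M.map qhd).f th) := by
    rw [← mapApply M κ' (relFst X.A co.r) th, ← mapApply M qhd σh th]
    have h : (relFst X.A co.r).comp κ' = σh.comp qhd := rfl
    rw [h]
  have e32 : (M.map (relSnd X.A co.r)).f ((M.map κ').f th)
      = (M.map (discHom X.A)).f th := by
    rw [← mapApply M κ' (relSnd X.A co.r) th]
    have h : (relSnd X.A co.r).comp κ' = discHom X.A := rfl
    rw [h]
  rw [e31, e32] at c3
  have hQ1 : (M.map p1).f wh = (M.map qhd).f sh := by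
    apply (hbij (discHom (quotPos co)) (discBij _)).1
    rw [← mapApply M p1 (discHom (quotPos co)) wh,
        ← mapApply M qhd (discHom (quotPos co)) sh]
    have hA : (discHom (quotPos co)).comp p1
        = (relFst (quotPos co) (fun a b => a ≤ b)).comp (discHom SQ) := rfl
    have hB : (discHom (quotPos co)).comp qhd
        = (quotHom co).comp (discHom X.A) := rfl
    rw [hA, hB, mapApply, mapApply]
    exact hw1
  have hQ2 : (M.map p2).f wh = (M.map qhd).f th := by
    apply (hbij (discHom (quotPos co)) (discBij _)).1
    rw [← mapApply M p2 (discHom (quotPos co)) wh,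
        ← mapApply M qhd (discHom (quotPos co)) th]
    have hA : (discHom (quotPos co)).comp p2
        = (relSnd (quotPos co) (fun a b => a ≤ b)).comp (discHom SQ) := rfl
    have hB : (discHom (quotPos co)).comp qhd
        = (quotHom co).comp (discHom X.A) := rfl
    rw [hA, hB, mapApply, mapApply]
    exact hw2
  have cm := H ((M.map k).f wh)
  have em1 : (M.map (relFst X.A co.r)).f ((M.map k).f wh)
      = (M.map σh).f ((M.map qhd).f sh) := by
    rw [← mapApply M k (relFst X.A co.r) wh]
    have h : (relFst X.A co.r).comp k = σh.comp p1 := rfl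
    rw [h, mapApply, hQ1]
  have em2 : (M.map (relSnd X.A co.r)).f ((M.map k).f wh)
      = (M.map σh).f ((M.map qhd).f th) := by
    rw [← mapApply M k (relSnd X.A co.r) wh]
    have h : (relSnd X.A co.r).comp k = σh.comp p2 := rfl
    rw [h, mapApply, hQ2]
  rw [em1, em2] at cm
  exact co.trans _ _ _ c2 (co.trans _ _ _ cm c3)

/-- Characterisations of congruence orderings.  For a preorder `r` containing the
order of the algebra `X`, the following are equivalent:
(1) `r` is a congruence ordering on `X`;
(2) `r` is the kernel of some morphism of `M`-algebras;
(3) for every `u ∈ M(r)` (the lift of the relation `r`),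
    `π(M p₀ (u)) r π(M p₁ (u))`, where `p₀, p₁` are the two projections;
(4) `r`, viewed as a subset of `A × A`, induces a subalgebra of the product algebra
    `A × A` (it is closed under the product of the product algebra). -/
theorem congruence_characterisations (M : OMonad) (hM : Convention M)
    (X : OAlg M) (r : X.A.car → X.A.car → Prop)
    (hr : ∀ a, r a a) (ht : ∀ a b c, r a b → r b c → r a c)
    (hle : ∀ a b : X.A.car, a ≤ b → r a b) :
    (IsCongOrdP M X ⟨r, hr, ht, hle⟩ ↔
      ∃ (Y : OAlg M) (φ : OAlgHom X Y),
        ∀ a b : X.A.car, r a b ↔ φ.h.f a ≤ φ.h.f b) ∧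
    (IsCongOrdP M X ⟨r, hr, ht, hle⟩ ↔
      ∀ u : (M.obj (relPos X.A r)).car,
        r (X.pi.f ((M.map (relFst X.A r)).f u))
          (X.pi.f ((M.map (relSnd X.A r)).f u))) ∧
    (IsCongOrdP M X ⟨r, hr, ht, hle⟩ ↔
      ∀ u : (M.obj (relPos X.A r)).car,
        r (X.pi.f ((M.map (prodFst X.A X.A)).f ((M.map (relIncl X.A r)).f u)))
          (X.pi.f ((M.map (prodSnd X.A X.A)).f ((M.map (relIncl X.A r)).f u)))) := by
  have iff2 : IsCongOrdP M X ⟨r, hr, ht, hle⟩ ↔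
      ∀ u : (M.obj (relPos X.A r)).car,
        r (X.pi.f ((M.map (relFst X.A r)).f u))
          (X.pi.f ((M.map (relSnd X.A r)).f u)) :=
    ⟨fun H u => congToLift M hM X ⟨r, hr, ht, hle⟩ H u,
     fun H => liftToCong M hM X ⟨r, hr, ht, hle⟩ H⟩
  have e4 : ∀ u : (M.obj (relPos X.A r)).car,
      (M.map (prodFst X.A X.A)).f ((M.map (relIncl X.A r)).f u)
        = (M.map (relFst X.A r)).f u := by
    intro u
    rw [← mapApply M (relIncl X.A r) (prodFst X.A X.A) u]
    have h : (prodFst X.A X.A).comp (relIncl X.A r) = relFst X.A r := rfl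
    rw [h]
  have e5 : ∀ u : (M.obj (relPos X.A r)).car,
      (M.map (prodSnd X.A X.A)).f ((M.map (relIncl X.A r)).f u)
        = (M.map (relSnd X.A r)).f u := by
    intro u
    rw [← mapApply M (relIncl X.A r) (prodSnd X.A X.A) u]
    have h : (prodSnd X.A X.A).comp (relIncl X.A r) = relSnd X.A r := rfl
    rw [h]
  refine ⟨⟨fun H => congToKer M hM X ⟨r, hr, ht, hle⟩ H, ?_⟩, iff2, ?_⟩
  · rintro ⟨Y, φ, hker⟩
    exact kerToCong M X ⟨r, hr, ht, hle⟩ Y φ hker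
  · refine iff2.trans ⟨fun H u => ?_, fun H u => ?_⟩
    · rw [e4 u, e5 u]; exact H u
    · have := H u
      rw [e4 u, e5 u] at this
      exact this
end

section
/- Let L be a lattice-closed logic with class of models 𝓜. A class C ⊆ 𝓜_ξ is L-definable if and only if there exists a finite set Δ ⊆ L_ξ of formulae such that whenever M ∈ C and M ⊑_Δ N (i.e., every formula of Δ satisfied by M is satisfied by N), then N ∈ C. -/
/-- A logic consists of (sorted) sets of formulae `L`, models `Mo`, and a satisfaction
relation `sat`.  Lattice-closedness is expressed by saying that the definable classes at
each sort are closed under finite (including empty) unions and intersections.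

**Statement.** For a lattice-closed logic, a class `C ⊆ Mo ξ` is `L`-definable if and
only if there is a finite set `Δ ⊆ L ξ` of formulae such that whenever `M ∈ C` and
`M ⊑_Δ N` (every formula of `Δ` satisfied by `M` is satisfied by `N`), then `N ∈ C`. -/
theorem definable_iff_closed_under_theory_extension {Ξ : Type*}
    (L : Ξ → Type*) (Mo : Ξ → Type*) (sat : ∀ ξ, Mo ξ → L ξ → Prop)
    (hempty : ∀ ξ : Ξ, ∃ φ : L ξ, {m | sat ξ m φ} = (∅ : Set (Mo ξ)))
    (huniv : ∀ ξ : Ξ, ∃ φ : L ξ, {m | sat ξ m φ} = (Set.univ : Set (Mo ξ)))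
    (hinter : ∀ (ξ : Ξ) (φ ψ : L ξ), ∃ χ : L ξ,
        {m | sat ξ m χ} = {m | sat ξ m φ} ∩ {m | sat ξ m ψ})
    (hunion : ∀ (ξ : Ξ) (φ ψ : L ξ), ∃ χ : L ξ,
        {m | sat ξ m χ} = {m | sat ξ m φ} ∪ {m | sat ξ m ψ})
    (ξ : Ξ) (C : Set (Mo ξ)) :
    (∃ φ : L ξ, C = {m | sat ξ m φ}) ↔
      ∃ Δ : Set (L ξ), Δ.Finite ∧
        ∀ M N : Mo ξ, M ∈ C → (∀ φ ∈ Δ, sat ξ M φ → sat ξ N φ) → N ∈ C := by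
  classical
  constructor
  · rintro ⟨φ, rfl⟩
    exact ⟨{φ}, Set.finite_singleton φ, fun M N hM h => h φ rfl hM⟩
  · rintro ⟨Δ, hΔfin, hΔ⟩
    -- finite intersections are definable
    have hinterFin : ∀ s : Finset (L ξ), ∃ χ : L ξ,
        {m | sat ξ m χ} = {m : Mo ξ | ∀ φ ∈ s, sat ξ m φ} := by
      intro s
      induction s using Finset.induction_on with
      | empty =>
          obtain ⟨χ, hχ⟩ := huniv ξ
          refine ⟨χ, ?_⟩
          have := Set.eq_univ_iff_forall.mp hχ
          ext m; simpa using this m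
      | @insert φ s hφs ih =>
          obtain ⟨ψ, hψ⟩ := ih
          obtain ⟨χ, hχ⟩ := hinter ξ φ ψ
          refine ⟨χ, ?_⟩
          have hχ' := Set.ext_iff.mp hχ
          have hψ' := Set.ext_iff.mp hψ
          ext m
          simp only [Set.mem_setOf_eq, Set.mem_inter_iff] at hχ' hψ' ⊢
          rw [hχ' m, hψ' m]
          simp [forall_and]
    -- finite unions are definable
    have hunionFin : ∀ s : Finset (L ξ), ∃ χ : L ξ,
        {m | sat ξ m χ} = {m : Mo ξ | ∃ φ ∈ s, sat ξ m φ} := by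
      intro s
      induction s using Finset.induction_on with
      | empty =>
          obtain ⟨χ, hχ⟩ := hempty ξ
          refine ⟨χ, ?_⟩
          have := Set.eq_empty_iff_forall_notMem.mp hχ
          ext m; simpa using this m
      | @insert φ s hφs ih =>
          obtain ⟨ψ, hψ⟩ := ih
          obtain ⟨χ, hχ⟩ := hunion ξ φ ψ
          refine ⟨χ, ?_⟩
          have hχ' := Set.ext_iff.mp hχ
          have hψ' := Set.ext_iff.mp hψ
          ext m
          simp only [Set.mem_setOf_eq, Set.mem_union] at hχ' hψ' ⊢
          rw [hχ' m, hψ' m]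
          simp
    set Δfin := hΔfin.toFinset with hΔfinDef
    -- choice of intersection formula for each finset
    choose g hg using hinterFin
    -- the "good" theories: subsets of Δfin realized by some model of C
    set good : Finset (Finset (L ξ)) :=
      Δfin.powerset.filter (fun S => ∃ M ∈ C, ∀ φ ∈ Δ, sat ξ M φ ↔ φ ∈ S) with hgood
    obtain ⟨χ, hχ⟩ := hunionFin (good.image g)
    refine ⟨χ, ?_⟩
    ext N
    have hχ' := Set.ext_iff.mp hχ N
    simp only [Set.mem_setOf_eq, Finset.mem_image] at hχ'
    constructor
    · intro hN
      rw [Set.mem_setOf_eq, hχ']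
      refine ⟨g (Δfin.filter (fun φ => sat ξ N φ)), ⟨_, ?_, rfl⟩, ?_⟩
      · rw [hgood, Finset.mem_filter]
        refine ⟨Finset.mem_powerset.mpr (Finset.filter_subset _ _), N, hN, fun φ hφ => ?_⟩
        simp [Finset.mem_filter, hΔfinDef, Set.Finite.mem_toFinset, hφ]
      · have := Set.ext_iff.mp (hg (Δfin.filter (fun φ => sat ξ N φ))) N
        simp only [Set.mem_setOf_eq] at this
        rw [this]
        intro φ hφ
        exact (Finset.mem_filter.mp hφ).2
    · intro hN
      rw [Set.mem_setOf_eq, hχ'] at hN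
      obtain ⟨ψ, ⟨S, hS, rfl⟩, hsatN⟩ := hN
      rw [hgood, Finset.mem_filter] at hS
      obtain ⟨hSsub, M, hM, hMth⟩ := hS
      have hNall : ∀ φ ∈ S, sat ξ N φ := by
        have := Set.ext_iff.mp (hg S) N
        simp only [Set.mem_setOf_eq] at this
        exact this.mp hsatN
      exact hΔ M N hM (fun φ hφ hMφ => hNall φ ((hMth φ hφ).mp hMφ))
end

section
/- There exists a first-order formula φ in the signature {S₀, S₁, ≼} of binary trees (left-successor, right-successor, descendant order) such that a finite complete binary tree satisfies φ if and only if every leaf of the tree is at an even distance from the root. -/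
open FirstOrder

/-- The first-order signature `{S₀, S₁, ≼}` of binary trees: three binary relation
symbols (left successor, right successor, and the descendant/tree order) and no
function symbols. -/
def treeLang : Language where
  Functions := fun _ => Empty
  Relations := fun n => match n with
    | 2 => Fin 3
    | _ => Empty

/-- Vertices of a tree given as a set of positions (words over `Bool`, the root
being the empty word). -/
def treePos (t : Set (List Bool)) : Type := {v : List Bool // v ∈ t}

/-- The `treeLang`-structure on the vertices of a tree `t`:  `S₀ u v` holds iff `v` is
the left successor of `u`, `S₁ u v` iff `v` is the right successor of `u`, and the third
relation is the tree order (prefix/ancestor relation, with the root as least element). -/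
def treeStructure (t : Set (List Bool)) : treeLang.Structure (treePos t) where
  funMap := fun {n} F _ => (match n, F with
    | _, F => Empty.elim F)
  RelMap := fun {n} R v => match n, R with
    | 2, R =>
        @ite _ (R = (0 : Fin 3)) (instDecidableEqFin 3 R 0) ((v 1).val = (v 0).val ++ [false])
        (@ite _ (R = (1 : Fin 3)) (instDecidableEqFin 3 R 1) ((v 1).val = (v 0).val ++ [true])
        ((v 0).val <+: (v 1).val))
    | 0, R => Empty.elim R
    | 1, R => Empty.elim R
    | (_ + 3), R => Empty.elim R

lemma relMap₂ (t : Set (List Bool)) (R : Fin 3) (a b : treePos t) :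
    (treeStructure t).RelMap (n := 2) R ![a,b] =
      (if R = 0 then b.1 = a.1 ++ [false]
       else if R = 1 then b.1 = a.1 ++ [true] else a.1 <+: b.1) := rfl

namespace Potthoff
open FirstOrder.Language FirstOrder.Language.BoundedFormula

def zig (k : ℕ) : List Bool := (List.range k).map (fun i => decide (i % 2 = 1))

@[simp] lemma zig_length (k : ℕ) : (zig k).length = k := by simp [zig]

@[simp] lemma zig_zero : zig 0 = [] := rfl

lemma zig_succ (k : ℕ) : zig (k+1) = zig k ++ [decide (k % 2 = 1)] := by
  simp [zig, List.range_succ]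

lemma zig_getElem (k j : ℕ) (h : j < k) :
    (zig k)[j]'(by simp [h]) = decide (j % 2 = 1) := by simp [zig]

lemma zig_take {n k : ℕ} (h : n ≤ k) : (zig k).take n = zig n := by
  rw [zig, zig, ← List.map_take, List.take_range, Nat.min_eq_left h]

lemma zig_prefix {n k : ℕ} (h : n ≤ k) : zig n <+: zig k := by
  rw [← zig_take h]; exact List.take_prefix _ _

lemma concat_inj {l₁ l₂ : List Bool} {a b : Bool} (h : l₁ ++ [a] = l₂ ++ [b]) :
    l₁ = l₂ ∧ a = b := by
  have h2 : l₁.length = l₂.length := by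
    have := congrArg List.length h; simp at this; omega
  have := List.append_inj h h2
  simp at this; tauto

lemma prefix_concat_iff {l₁ l₂ : List Bool} {a : Bool} :
    l₁ <+: l₂ ++ [a] ↔ l₁ = l₂ ++ [a] ∨ l₁ <+: l₂ := by
  constructor
  · intro h
    rcases h with ⟨s, hs⟩
    rcases List.eq_nil_or_concat s with rfl | ⟨s', c, rfl⟩
    · left; simpa using hs
    · right
      rw [List.concat_eq_append, ← List.append_assoc] at hs
      exact ⟨s', (concat_inj hs).1⟩
  · rintro (rfl | h)
    · exact List.prefix_refl _
    · exact h.trans (List.prefix_append _ _)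

lemma take_concat (l : List Bool) (n : ℕ) (h : n < l.length) :
    l.take (n+1) = l.take n ++ [l[n] ] := by
  rw [List.take_succ]; simp [List.getElem?_eq_getElem h]

lemma parity_ne (j : ℕ) : decide (j % 2 = 1) ≠ decide ((j+1) % 2 = 1) := by
  rcases Nat.mod_two_eq_zero_or_one j with h | h <;> simp [h, Nat.add_mod]


/-- atomic relation formula -/
def rf (k : Fin 3) {n : ℕ} (i j : Fin n) : treeLang.BoundedFormula Empty n :=
  Relations.boundedFormula₂ (show treeLang.Relations 2 from k)
    (Term.var (Sum.inr i)) (Term.var (Sum.inr j))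

def eqf {n : ℕ} (i j : Fin n) : treeLang.BoundedFormula Empty n :=
  Term.bdEqual (Term.var (Sum.inr i)) (Term.var (Sum.inr j))

/-- no two consecutive `b`-steps between `i` and `j` -/
def noDouble (b : Fin 3) {n : ℕ} (i j : Fin n) : treeLang.BoundedFormula Empty n :=
  ∼((rf 2 i.castSucc.castSucc.castSucc ((Fin.last n).castSucc.castSucc) ⊓
     rf b ((Fin.last n).castSucc.castSucc) ((Fin.last (n+1)).castSucc) ⊓
     rf b ((Fin.last (n+1)).castSucc) (Fin.last (n+2)) ⊓
     rf 2 (Fin.last (n+2)) j.castSucc.castSucc.castSucc).ex.ex.ex)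

def onZig {n : ℕ} (i j : Fin n) : treeLang.BoundedFormula Empty n :=
  rf 2 i j ⊓
  (∼((rf 1 i.castSucc (Fin.last n) ⊓ rf 2 (Fin.last n) j.castSucc).ex)) ⊓
  noDouble 0 i j ⊓ noDouble 1 i j

def leaf {n : ℕ} (i : Fin n) : treeLang.BoundedFormula Empty n :=
  ∼((rf 0 i.castSucc (Fin.last n)).ex) ⊓ ∼((rf 1 i.castSucc (Fin.last n)).ex)

def evenZ {n : ℕ} (i : Fin n) : treeLang.BoundedFormula Empty n :=
  (leaf (Fin.last n) ⊓ onZig i.castSucc (Fin.last n) ⊓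
    (eqf (Fin.last n) i.castSucc ⊔
      (rf 1 (Fin.last (n+1)) ((Fin.last n).castSucc)).ex)).ex

def phi : treeLang.Sentence :=
  (((rf 2 ((Fin.last 0).castSucc) (Fin.last 1)).all.imp (evenZ (Fin.last 0))).all) ⊓
  ((((rf 0 ((Fin.last 0).castSucc) (Fin.last 1) ⊔ rf 1 ((Fin.last 0).castSucc) (Fin.last 1)).imp
      ((evenZ ((Fin.last 0).castSucc)).iff (∼(evenZ (Fin.last 1))))).all).all)

section
variable {t : Set (List Bool)}

def Lf (t : Set (List Bool)) (y : List Bool) : Prop := y ++ [false] ∉ t ∧ y ++ [true] ∉ t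

def OZ (t : Set (List Bool)) (x y : List Bool) : Prop :=
  x <+: y ∧ (¬ ∃ v : treePos t, v.1 = x ++ [true] ∧ v.1 <+: y) ∧
  (∀ b : Bool, ¬ ∃ u v w : treePos t,
      x <+: u.1 ∧ v.1 = u.1 ++ [b] ∧ w.1 = v.1 ++ [b] ∧ w.1 <+: y)

def EvZ (t : Set (List Bool)) (x : List Bool) : Prop :=
  ∃ y : treePos t, ((¬ ∃ z : treePos t, z.1 = y.1 ++ [false]) ∧
      (¬ ∃ z : treePos t, z.1 = y.1 ++ [true])) ∧
    OZ t x y.1 ∧ (y.1 = x ∨ ∃ u : treePos t, y.1 = u.1 ++ [true])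

attribute [local instance] treeStructure

lemma realize_rf {k : Fin 3} {n : ℕ} {i j : Fin n} {xs : Fin n → treePos t} :
    (rf k i j).Realize (default : Empty → treePos t) xs ↔
      (if k = 0 then (xs j).1 = (xs i).1 ++ [false]
       else if k = 1 then (xs j).1 = (xs i).1 ++ [true] else (xs i).1 <+: (xs j).1) := by
  rw [rf, realize_rel₂]
  simp only [Term.realize_var, Sum.elim_inr]
  rw [show (Structure.RelMap (L := treeLang) (M := treePos t)) = (treeStructure t).RelMap from rfl,
    relMap₂]

lemma realize_rf0 {n : ℕ} {i j : Fin n} {xs : Fin n → treePos t} :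
    (rf 0 i j).Realize (default : Empty → treePos t) xs ↔ (xs j).1 = (xs i).1 ++ [false] := by
  rw [realize_rf]; norm_num

lemma realize_rf1 {n : ℕ} {i j : Fin n} {xs : Fin n → treePos t} :
    (rf 1 i j).Realize (default : Empty → treePos t) xs ↔ (xs j).1 = (xs i).1 ++ [true] := by
  rw [realize_rf]; norm_num

lemma realize_rf2 {n : ℕ} {i j : Fin n} {xs : Fin n → treePos t} :
    (rf 2 i j).Realize (default : Empty → treePos t) xs ↔ (xs i).1 <+: (xs j).1 := by
  rw [realize_rf, if_neg (by decide), if_neg (by decide)]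

lemma realize_onZig {n : ℕ} {i j : Fin n} {xs : Fin n → treePos t} :
    (onZig i j).Realize (default : Empty → treePos t) xs ↔ OZ t (xs i).1 (xs j).1 := by
  simp only [onZig, noDouble, OZ, realize_inf, realize_not, realize_ex, realize_rf0,
    realize_rf1, realize_rf2, Fin.snoc_castSucc, Fin.snoc_last]
  constructor
  · rintro ⟨⟨⟨h1, h2⟩, h3⟩, h4⟩
    refine ⟨h1, h2, ?_⟩
    rintro b ⟨u, v, w, hu, hv, hw, hwy⟩
    cases b
    · exact h3 ⟨u, v, w, ⟨⟨hu, hv⟩, hw⟩, hwy⟩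
    · exact h4 ⟨u, v, w, ⟨⟨hu, hv⟩, hw⟩, hwy⟩
  · rintro ⟨h1, h2, h3⟩
    refine ⟨⟨⟨h1, h2⟩, ?_⟩, ?_⟩
    · rintro ⟨u, v, w, ⟨⟨hu, hv⟩, hw⟩, hwy⟩
      exact h3 false ⟨u, v, w, hu, hv, hw, hwy⟩
    · rintro ⟨u, v, w, ⟨⟨hu, hv⟩, hw⟩, hwy⟩
      exact h3 true ⟨u, v, w, hu, hv, hw, hwy⟩

lemma realize_evenZ {n : ℕ} {i : Fin n} {xs : Fin n → treePos t} :
    (evenZ i).Realize (default : Empty → treePos t) xs ↔ EvZ t (xs i).1 := by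
  simp only [evenZ, leaf, eqf, EvZ, realize_ex, realize_inf, realize_sup, realize_not,
    realize_bdEqual, realize_rf0, realize_rf1, realize_onZig, Term.realize_var, Sum.elim_inr,
    Fin.snoc_castSucc, Fin.snoc_last]
  constructor
  · rintro ⟨y, ⟨⟨hl, hz⟩, hd⟩⟩
    refine ⟨y, hl, hz, ?_⟩
    rcases hd with h | ⟨u, hu⟩
    · exact Or.inl (congrArg Subtype.val h)
    · exact Or.inr ⟨u, hu⟩
  · rintro ⟨y, hl, hz, hd⟩
    refine ⟨y, ⟨⟨hl, hz⟩, ?_⟩⟩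
    rcases hd with h | ⟨u, hu⟩
    · exact Or.inl (Subtype.ext h)
    · exact Or.inr ⟨u, hu⟩

lemma realize_phi :
    (phi.Realize (treePos t) ↔
      ((∀ r : treePos t, (∀ x : treePos t, r.1 <+: x.1) → EvZ t r.1) ∧
       (∀ x y : treePos t, (y.1 = x.1 ++ [false] ∨ y.1 = x.1 ++ [true]) →
          (EvZ t x.1 ↔ ¬ EvZ t y.1)))) := by
  simp only [phi, Sentence.Realize, Formula.Realize, realize_inf, realize_all, realize_imp,
    realize_sup, realize_iff, realize_not, realize_rf0, realize_rf1, realize_rf2,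
    realize_evenZ, Fin.snoc_castSucc, Fin.snoc_last]

lemma prefClosed (hdown : ∀ (v : List Bool) (b : Bool), v ++ [b] ∈ t → v ∈ t) :
    ∀ u w : List Bool, u <+: w → w ∈ t → u ∈ t := by
  intro u w
  induction w using List.reverseRecOn with
  | nil =>
    intro h hm
    rw [List.prefix_nil] at h; subst h; exact hm
  | append_singleton ys b ih =>
    intro h hm
    rcases prefix_concat_iff.mp h with rfl | h'
    · exact hm
    · exact ih h' (hdown ys b hm)

lemma oz_iff (hdown : ∀ (v : List Bool) (b : Bool), v ++ [b] ∈ t → v ∈ t)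
    {x y : List Bool} (hy : y ∈ t) : OZ t x y ↔ ∃ k, y = x ++ zig k := by
  constructor
  · rintro ⟨⟨s, rfl⟩, h2, h3⟩
    have hgs : ∀ j, ∀ hj : j < s.length, s[j] = decide (j % 2 = 1) := by
      intro j
      induction j with
      | zero =>
        intro hj
        by_contra hne
        have h0 : s[0] = true := by cases h : s[0] <;> simp_all
        apply h2
        have hpre : x ++ [true] <+: x ++ s := by
          rw [List.prefix_append_right_inj]
          have : s.take 1 = [true] := by
            rw [take_concat s 0 hj, h0]; simp
          rw [← this]; exact List.take_prefix _ _
        exact ⟨⟨x ++ [true], prefClosed hdown _ _ hpre hy⟩, rfl, hpre⟩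
      | succ j ihj =>
        intro hj
        have hjlt : j < s.length := by omega
        have hsj := ihj hjlt
        by_contra hne
        have heq : s[j+1] = s[j] := by
          cases ha : s[j+1] <;> cases hb : s[j] <;>
            simp_all [show ((j+1) % 2 = 1) ↔ ¬ (j % 2 = 1) by omega]
        have key : s.take j ++ [s[j], s[j+1] ] <+: s := by
          have ht : s.take (j+2) = s.take j ++ [s[j], s[j+1] ] := by
            rw [take_concat s (j+1) hj, take_concat s j hjlt, List.append_assoc]
            rfl
          rw [← ht]; exact List.take_prefix _ _
        apply h3 s[j]
        have hmem : ∀ z : List Bool, z <+: x ++ s → z ∈ t :=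
          fun z hz => prefClosed hdown _ _ hz hy
        have k1 : x ++ s.take j ++ [s[j] ] ++ [s[j] ] <+: x ++ s := by
          rw [List.append_assoc (x ++ s.take j), List.append_assoc x]
          rw [List.prefix_append_right_inj]
          rw [heq] at key
          simpa using key
        refine ⟨⟨x ++ s.take j, hmem _ ?_⟩, ⟨x ++ s.take j ++ [s[j] ], hmem _ ?_⟩,
          ⟨x ++ s.take j ++ [s[j] ] ++ [s[j] ], hmem _ k1⟩, ?_, by simp, by simp, k1⟩
        · exact ((List.prefix_append _ _).trans ((List.prefix_append _ _))).trans k1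
        · exact (List.prefix_append _ _).trans k1
        · exact List.prefix_append _ _
    have hs : s = zig s.length :=
      List.ext_getElem (by simp) (fun j h1' h2' => by
        rw [hgs j h1', zig_getElem _ _ (by simpa using h2')])
    exact ⟨s.length, by rw [← hs]⟩
  · rintro ⟨k, rfl⟩
    refine ⟨List.prefix_append _ _, ?_, ?_⟩
    · rintro ⟨v, hv, hpre⟩
      rw [hv, List.prefix_append_right_inj] at hpre
      have hk : 1 ≤ k := by
        have := hpre.length_le; simpa using this
      have h1 : [true] = zig 1 := by
        rw [List.prefix_iff_eq_take] at hpre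
        rw [hpre]; simp [zig_take hk]
      exact absurd h1 (by decide)
    · rintro b ⟨u, v, w, ⟨p, hp⟩, hv, hw, hwy⟩
      rw [hw, hv, ← hp, List.append_assoc, List.append_assoc,
        List.prefix_append_right_inj, ← List.append_assoc] at hwy
      have hlen : p.length + 2 ≤ k := by
        have h' := hwy.length_le; simp at h'; omega
      rw [List.prefix_iff_eq_take] at hwy
      rw [show (p ++ [b] ++ [b]).length = p.length + 2 by simp, zig_take hlen,
        show p.length + 2 = (p.length + 1) + 1 from rfl, zig_succ, zig_succ] at hwy
      obtain ⟨h1, h2⟩ := concat_inj hwy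
      obtain ⟨h3, h4⟩ := concat_inj h1
      exact parity_ne p.length (h4.symm.trans h2)

lemma lf_iff {y : treePos t} :
    ((¬ ∃ z : treePos t, z.1 = y.1 ++ [false]) ∧ (¬ ∃ z : treePos t, z.1 = y.1 ++ [true])) ↔
      Lf t y.1 := by
  constructor
  · rintro ⟨h1, h2⟩
    exact ⟨fun hm => h1 ⟨⟨_, hm⟩, rfl⟩, fun hm => h2 ⟨⟨_, hm⟩, rfl⟩⟩
  · rintro ⟨h1, h2⟩
    exact ⟨fun ⟨z, hz⟩ => h1 (hz ▸ z.2), fun ⟨z, hz⟩ => h2 (hz ▸ z.2)⟩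

lemma zigleaf_unique (hdown : ∀ (v : List Bool) (b : Bool), v ++ [b] ∈ t → v ∈ t)
    {x : List Bool} {k k' : ℕ} (h1 : x ++ zig k ∈ t) (h2 : Lf t (x ++ zig k))
    (h1' : x ++ zig k' ∈ t) (h2' : Lf t (x ++ zig k')) : k = k' := by
  have main : ∀ m m' : ℕ, m < m' → x ++ zig m' ∈ t → Lf t (x ++ zig m) → False := by
    intro m m' hlt hm' hlf
    have hpre : x ++ zig (m+1) <+: x ++ zig m' := by
      rw [List.prefix_append_right_inj]; exact zig_prefix (by omega)
    have hmem : x ++ zig (m+1) ∈ t := prefClosed hdown _ _ hpre hm'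
    rw [zig_succ, ← List.append_assoc] at hmem
    cases h : decide (m % 2 = 1)
    · rw [h] at hmem; exact hlf.1 hmem
    · rw [h] at hmem; exact hlf.2 hmem
  rcases lt_trichotomy k k' with h | h | h
  · exact absurd (main k k' h h1' h2) not_false
  · exact h
  · exact absurd (main k' k h h1 h2') not_false

lemma zigleaf_exists (hfin : t.Finite)
    (hcomp : ∀ v ∈ t, ∀ b : Bool, v ++ [b] ∈ t → v ++ [!b] ∈ t)
    {x : List Bool} (hx : x ∈ t) : ∃ k, (x ++ zig k ∈ t) ∧ Lf t (x ++ zig k) := by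
  classical
  have hstop : ∃ k, x ++ zig (k+1) ∉ t := by
    by_contra h
    push_neg at h
    have hinj : Function.Injective (fun k : ℕ => x ++ zig (k+1)) := by
      intro a b hab
      have := congrArg List.length hab; simp at this; omega
    exact (Set.infinite_of_injective_forall_mem hinj h) hfin
  refine ⟨Nat.find hstop, ?_, ?_⟩
  · rcases Nat.eq_zero_or_pos (Nat.find hstop) with h | h
    · rw [h]; simpa using hx
    · have := Nat.find_min hstop (m := Nat.find hstop - 1) (by omega)
      rw [not_not] at this
      rwa [show Nat.find hstop - 1 + 1 = Nat.find hstop by omega] at this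
  · have hmem : x ++ zig (Nat.find hstop) ∈ t := by
      rcases Nat.eq_zero_or_pos (Nat.find hstop) with h | h
      · rw [h]; simpa using hx
      · have := Nat.find_min hstop (m := Nat.find hstop - 1) (by omega)
        rw [not_not] at this
        rwa [show Nat.find hstop - 1 + 1 = Nat.find hstop by omega] at this
    have hnot := Nat.find_spec hstop
    rw [zig_succ, ← List.append_assoc] at hnot
    set d := decide (Nat.find hstop % 2 = 1) with hd
    have hnot' : x ++ zig (Nat.find hstop) ++ [!d] ∉ t := by
      intro hmem'
      exact hnot (by simpa using hcomp _ hmem (!d) hmem')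
    constructor
    · cases hdd : d
      · rw [← hdd]; exact hnot
      · have hh : (!d) = false := by rw [hdd]; rfl
        rw [← hh]; exact hnot'
    · cases hdd : d
      · have hh : (!d) = true := by rw [hdd]; rfl
        rw [← hh]; exact hnot'
      · rw [← hdd]; exact hnot

lemma evz_iff (hdown : ∀ (v : List Bool) (b : Bool), v ++ [b] ∈ t → v ∈ t)
    {x : List Bool} {k : ℕ} (h1 : x ++ zig k ∈ t) (h2 : Lf t (x ++ zig k)) :
    EvZ t x ↔ Even k := by
  constructor
  · rintro ⟨y, hyl, hOZ, hd⟩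
    obtain ⟨k', hk'⟩ := (oz_iff hdown y.2).mp hOZ
    have hy2 : Lf t y.1 := lf_iff.mp hyl
    rw [hk'] at hy2
    have hkk : k' = k := zigleaf_unique hdown (hk' ▸ y.2) hy2 h1 h2
    subst hkk
    rcases hd with h | ⟨u, hu⟩
    · rw [hk'] at h
      have h0 : zig k' = [] := by simpa using h
      have hk0 : k' = 0 := by simpa using congrArg List.length h0
      simp [hk0]
    · rcases Nat.eq_zero_or_pos k' with h | h
      · simp [h]
      · rw [hk', show k' = (k'-1)+1 by omega, zig_succ, ← List.append_assoc] at hu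
        obtain ⟨-, hb⟩ := concat_inj hu.symm
        have hodd : (k'-1) % 2 = 1 := by simpa using hb
        refine Nat.even_iff.mpr ?_
        omega
  · intro hk
    refine ⟨⟨x ++ zig k, h1⟩, lf_iff.mpr h2, (oz_iff hdown h1).mpr ⟨k, rfl⟩, ?_⟩
    rcases Nat.eq_zero_or_pos k with h | h
    · left; simp [h]
    · right
      have hpre : x ++ zig (k-1) <+: x ++ zig k := by
        rw [List.prefix_append_right_inj]; exact zig_prefix (by omega)
      refine ⟨⟨x ++ zig (k-1), prefClosed hdown _ _ hpre h1⟩, ?_⟩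
      show x ++ zig k = x ++ zig (k-1) ++ [true]
      rw [show k = (k-1)+1 by omega, zig_succ, ← List.append_assoc]
      congr 2
      have : (k-1) % 2 = 1 := by
        rcases Nat.even_iff.mp hk with h'
        omega
      simp [this]

end
end Potthoff

attribute [local instance] treeStructure

/-- **Potthoff's Lemma.** There is a first-order sentence `φ` over the signature
`{S₀, S₁, ≼}` such that a finite complete binary tree satisfies `φ` if and only if
every leaf has even distance from the root.  Trees are modelled as finite, nonempty,
prefix-closed sets of positions in which every vertex has either no or both successors
(complete binary); a leaf is a vertex without successors, and its distance from the
root is the length of its position. -/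
theorem potthoff_even_depth :
    ∃ φ : treeLang.Sentence,
      ∀ t : Set (List Bool), t.Finite → ([] : List Bool) ∈ t →
        (∀ (v : List Bool) (b : Bool), v ++ [b] ∈ t → v ∈ t) →
        (∀ v ∈ t, ∀ b : Bool, v ++ [b] ∈ t → v ++ [!b] ∈ t) →
        ((@FirstOrder.Language.Sentence.Realize treeLang (treePos t) (treeStructure t) φ) ↔
          ∀ v ∈ t, (v ++ [false] ∉ t ∧ v ++ [true] ∉ t) → Even v.length) := by
  refine ⟨Potthoff.phi, ?_⟩
  intro t hfin hroot hdown hcomp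
  rw [Potthoff.realize_phi]
  constructor
  · rintro ⟨P1, P2⟩ v hv hleaf
    have claim : ∀ x : List Bool, x ∈ t → (Potthoff.EvZ t x ↔ Even x.length) := by
      intro x
      induction x using List.reverseRecOn with
      | nil =>
        intro hx
        have hroot' : Potthoff.EvZ t [] := P1 ⟨[], hroot⟩ (fun z => List.nil_prefix)
        simp [hroot']
      | append_singleton ys b ih =>
        intro hx
        have hys : ys ∈ t := hdown ys b hx
        have hedge := P2 ⟨ys, hys⟩ ⟨ys ++ [b], hx⟩
          (by cases b <;> [exact Or.inl rfl; exact Or.inr rfl])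
        rw [show (ys ++ [b]).length = ys.length + 1 by simp, Nat.even_add_one, ← ih hys]
        tauto
    have hEv : Potthoff.EvZ t v := by
      refine ⟨⟨v, hv⟩, Potthoff.lf_iff.mpr hleaf, ?_, Or.inl rfl⟩
      exact (Potthoff.oz_iff hdown hv).mpr ⟨0, by simp⟩
    exact (claim v hv).mp hEv
  · intro hall
    have E : ∀ x : List Bool, x ∈ t → (Potthoff.EvZ t x ↔ Even x.length) := by
      intro x hx
      obtain ⟨k, hk1, hk2⟩ := Potthoff.zigleaf_exists hfin hcomp hx
      have hkl := hall _ hk1 hk2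
      rw [Potthoff.evz_iff hdown hk1 hk2]
      rw [show (x ++ Potthoff.zig k).length = x.length + k by simp] at hkl
      exact (Nat.even_add.mp hkl).symm
    constructor
    · intro r hr
      have hr0 : r.1 = [] := List.prefix_nil.mp (hr ⟨[], hroot⟩)
      rw [E r.1 r.2, hr0]
      simp
    · intro x y hxy
      have hy : y.1.length = x.1.length + 1 := by rcases hxy with h | h <;> simp [h]
      rw [E x.1 x.2, E y.1 y.2, hy, Nat.even_add_one]
      tauto
end
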